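/- Let g be α-μ distributed with integer α, μ ≥ 1, scale Ω > 0, and let ν > 0 satisfy αμ > 2ν. Then lim_{ρ → ∞} [−(1/ν) log₂ E[(1 + aρg)^{−ν}] − log₂(aρ)] = −(1/ν) log₂[(μ^{1/α}/Ω)^{2ν} Γ(μ − 2ν/α)/Γ(μ)], for any fixed a > 0. -/

import Mathlib

open MeasureTheory Real Filter

lemma aux_integrable' {p q b : ℝ} (hp : 0 < p) (hq : -1 < q) (hb : 0 < b) :
    IntegrableOn (fun x : ℝ => x ^ q * Real.exp (-b * x ^ p)) (Set.Ioi 0) := by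
  set g : ℝ → ℝ := fun y => y ^ ((q + 1) / p - 1) * Real.exp (-b * y) with hg_def
  have hg : IntegrableOn g (Set.Ioi 0) := by
    have h := integrableOn_rpow_mul_exp_neg_mul_rpow
      (show (-1:ℝ) < (q + 1) / p - 1 by
        have : 0 < (q + 1) / p := div_pos (by linarith) hp
        linarith) one_pos hb
    simpa [hg_def, Real.rpow_one] using h
  have hderiv : ∀ x ∈ Set.Ioi (0:ℝ),
      HasDerivWithinAt (fun t : ℝ => t ^ p) (p * x ^ (p - 1)) (Set.Ioi 0) x :=
    fun x hx => (Real.hasDerivAt_rpow_const (Or.inl (ne_of_gt hx))).hasDerivWithinAt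
  have hinj : Set.InjOn (fun t : ℝ => t ^ p) (Set.Ioi 0) :=
    StrictMonoOn.injOn fun x hx y _ hxy => Real.rpow_lt_rpow (le_of_lt hx) hxy hp
  have himg : (fun t : ℝ => t ^ p) '' Set.Ioi 0 = Set.Ioi 0 := by
    ext x
    constructor
    · rintro ⟨y, hy, rfl⟩; exact Real.rpow_pos_of_pos hy p
    · intro hx
      exact ⟨x ^ (1 / p), Real.rpow_pos_of_pos hx _, by
        show (x ^ (1/p)) ^ p = x
        rw [← Real.rpow_mul (le_of_lt hx), one_div_mul_cancel hp.ne', Real.rpow_one]⟩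
  have key := (integrableOn_image_iff_integrableOn_abs_deriv_smul measurableSet_Ioi hderiv hinj g)
  rw [himg] at key
  have h2 : IntegrableOn (fun x : ℝ => |p * x ^ (p - 1)| • g (x ^ p)) (Set.Ioi 0) := key.mp hg
  have h3 := h2.const_mul (1 / p)
  refine MeasureTheory.IntegrableOn.congr_fun h3 (fun x hx => ?_) measurableSet_Ioi
  have hx : (0:ℝ) < x := hx
  have h4 : |p * x ^ (p - 1)| = p * x ^ (p - 1) := abs_of_pos (by positivity)
  simp only [smul_eq_mul, h4, hg_def]
  rw [← Real.rpow_mul hx.le]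
  have he : p * ((q + 1) / p - 1) = q + 1 - p := by field_simp
  rw [he]
  rw [show (1:ℝ)/p * (p * x ^ (p-1) * (x ^ (q+1-p) * Real.exp (-b * x ^ p)))
      = (x ^ (p-1) * x ^ (q+1-p)) * Real.exp (-b * x ^ p) by field_simp,
    ← Real.rpow_add hx]
  ring_nf

set_option maxHeartbeats 1000000 in
/-- High-SNR approximation of the strong user's effective rate over α-μ fading:
`R(ρ) − log₂(aρ) → −(1/ν) log₂[(μ^{1/α}/Ω)^{2ν} Γ(μ − 2ν/α)/Γ(μ)]` as `ρ → ∞`. -/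
theorem strongUser_effectiveRate_highSNR (α μ : ℕ) (hα : 1 ≤ α) (hμ : 1 ≤ μ)
    (Ω : ℝ) (hΩ : 0 < Ω) (ν : ℝ) (hν : 0 < ν) (hνc : (2:ℝ) * ν < α * μ)
    (a : ℝ) (ha : 0 < a) :
    Tendsto (fun ρ : ℝ =>
        -(1 / ν) * Real.logb 2
          (∫ x in Set.Ioi (0:ℝ),
            (1 + a * ρ * x) ^ (-ν) *
              ((α * (μ:ℝ) ^ μ * x ^ ((α * μ : ℝ) / 2 - 1)) / (2 * Ω ^ (α * μ) * Real.Gamma μ) *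
                Real.exp (-(μ:ℝ) * x ^ ((α : ℝ) / 2) / Ω ^ α)))
          - Real.logb 2 (a * ρ))
      atTop
      (nhds (-(1 / ν) * Real.logb 2
        (((μ:ℝ) ^ ((1:ℝ)/α) / Ω) ^ (2 * ν) *
          (Real.Gamma ((μ:ℝ) - 2 * ν / α) / Real.Gamma μ)))) := by
  have hα0 : (0:ℝ) < α := by exact_mod_cast hα
  have hμ0 : (0:ℝ) < μ := by exact_mod_cast hμ
  set p : ℝ := (α:ℝ) / 2 with hp_def
  have hp : 0 < p := by positivity
  set b : ℝ := (μ:ℝ) / Ω ^ α with hb_def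
  have hb : 0 < b := by positivity
  set m : ℝ := (α:ℝ) * μ / 2 with hm_def
  have hm : ν < m := by rw [hm_def]; linarith
  have hm0 : 0 < m := lt_trans hν hm
  have hΓμ : 0 < Real.Gamma μ := Real.Gamma_pos_of_pos hμ0
  set C : ℝ := (α:ℝ) * (μ:ℝ) ^ μ / (2 * Ω ^ (α * μ) * Real.Gamma μ) with hC_def
  have hC : 0 < C := by positivity
  set s : ℝ := (μ:ℝ) - 2 * ν / α with hs_def
  have hs : 0 < s := by
    rw [hs_def, sub_pos, div_lt_iff₀ hα0]
    linarith
  set f : ℝ → ℝ := fun x => C * (x ^ (m - 1) * Real.exp (-b * x ^ p)) with hf_def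
  -- the pdf in the statement equals f
  have hfeq : ∀ x : ℝ,
      ((α:ℝ) * (μ:ℝ) ^ μ * x ^ ((α:ℝ) * (μ:ℝ) / 2 - 1)) / (2 * Ω ^ (α * μ) * Real.Gamma μ) *
        Real.exp (-(μ:ℝ) * x ^ ((α : ℝ) / 2) / Ω ^ α) = f x := by
    intro x
    have hexp : -(μ:ℝ) * x ^ ((α : ℝ) / 2) / Ω ^ α = -b * x ^ p := by
      rw [hb_def, hp_def]; field_simp
    rw [hexp, hf_def, hC_def, hm_def]
    ring
  have hf_nonneg : ∀ x ∈ Set.Ioi (0:ℝ), 0 ≤ f x := by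
    intro x hx
    have hx : (0:ℝ) < x := hx
    rw [hf_def]
    positivity
  have hf_pos : ∀ x ∈ Set.Ioi (0:ℝ), 0 < f x := by
    intro x hx
    have hx : (0:ℝ) < x := hx
    rw [hf_def]
    positivity
  have hf_int : IntegrableOn f (Set.Ioi 0) :=
    (aux_integrable' hp (by linarith) hb).const_mul C
  have hf_cont : ContinuousOn f (Set.Ioi 0) := by
    apply ContinuousOn.mul continuousOn_const
    apply ContinuousOn.mul
    · exact fun x hx => (Real.continuousAt_rpow_const x _ (Or.inl (ne_of_gt hx))).continuousWithinAt
    · exact (Real.continuous_exp.comp_continuousOn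
        (continuousOn_const.mul (fun x hx =>
          (Real.continuousAt_rpow_const x _ (Or.inl (ne_of_gt hx))).continuousWithinAt)))
  -- the bound function, x ^ (-ν) * f x, and its integral
  have hbound_eq : ∀ x ∈ Set.Ioi (0:ℝ),
      C * (x ^ (m - ν - 1) * Real.exp (-b * x ^ p)) = x ^ (-ν) * f x := by
    intro x hx
    have hx : (0:ℝ) < x := hx
    rw [hf_def]
    rw [show m - ν - 1 = -ν + (m - 1) by ring, Real.rpow_add hx]
    ring
  have hbound_int : IntegrableOn (fun x : ℝ => x ^ (-ν) * f x) (Set.Ioi 0) := by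
    refine MeasureTheory.IntegrableOn.congr_fun
      ((aux_integrable' hp (show (-1:ℝ) < m - ν - 1 by linarith) hb).const_mul C)
      hbound_eq measurableSet_Ioi
  -- the value of the limit integral
  have hT_pos : 0 < ((μ:ℝ) ^ ((1:ℝ)/α) / Ω) ^ (2 * ν) * (Real.Gamma s / Real.Gamma μ) := by
    have := Real.Gamma_pos_of_pos hs
    positivity
  have hT : ∫ x in Set.Ioi (0:ℝ), x ^ (-ν) * f x
      = ((μ:ℝ) ^ ((1:ℝ)/α) / Ω) ^ (2 * ν) * (Real.Gamma s / Real.Gamma μ) := by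
    rw [← setIntegral_congr_fun measurableSet_Ioi hbound_eq]
    rw [MeasureTheory.integral_const_mul]
    rw [integral_rpow_mul_exp_neg_mul_rpow hp (show (-1:ℝ) < m - ν - 1 by linarith) hb]
    have hexp : (m - ν - 1 + 1) / p = s := by
      rw [hm_def, hp_def, hs_def]
      field_simp
      ring
    rw [show -(m - ν - 1 + 1) / p = -s by rw [neg_div, hexp], hexp]
    -- constant identity, via logs
    have hL : 0 < C * (b ^ (-s) * (1 / p) * Real.Gamma s) := by
      have := Real.Gamma_pos_of_pos hs
      positivity
    apply Real.log_injOn_pos (Set.mem_Ioi.2 hL) (Set.mem_Ioi.2 hT_pos)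
    have hΓs := Real.Gamma_pos_of_pos hs
    have hμμ : (0:ℝ) < (μ:ℝ) ^ μ := pow_pos hμ0 μ
    have hΩαμ : (0:ℝ) < Ω ^ (α * μ) := pow_pos hΩ _
    have hΩα : (0:ℝ) < Ω ^ α := pow_pos hΩ α
    have hbs : (0:ℝ) < b ^ (-s) := Real.rpow_pos_of_pos hb _
    have hμα : (0:ℝ) < (μ:ℝ) ^ ((1:ℝ)/(α:ℝ)) := Real.rpow_pos_of_pos hμ0 _
    rw [Real.log_mul (ne_of_gt hC) (ne_of_gt (mul_pos (mul_pos hbs (one_div_pos.mpr hp)) hΓs)),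
      Real.log_mul (ne_of_gt (mul_pos hbs (one_div_pos.mpr hp))) (ne_of_gt hΓs),
      Real.log_mul (ne_of_gt hbs) (ne_of_gt (one_div_pos.mpr hp)), Real.log_rpow hb,
      Real.log_mul (ne_of_gt (Real.rpow_pos_of_pos (div_pos hμα hΩ) _))
        (ne_of_gt (div_pos hΓs hΓμ)),
      Real.log_rpow (div_pos hμα hΩ), Real.log_div (ne_of_gt hΓs) (ne_of_gt hΓμ),
      hC_def, hb_def, hp_def, hs_def,
      Real.log_div (ne_of_gt (mul_pos hα0 hμμ)) (ne_of_gt (mul_pos (mul_pos two_pos hΩαμ) hΓμ)),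
      Real.log_div (ne_of_gt hμ0) (ne_of_gt hΩα),
      Real.log_div (ne_of_gt hμα) (ne_of_gt hΩ),
      Real.log_mul (ne_of_gt (mul_pos two_pos hΩαμ)) (ne_of_gt hΓμ),
      Real.log_mul (ne_of_gt two_pos) (ne_of_gt hΩαμ),
      Real.log_mul (ne_of_gt hα0) (ne_of_gt hμμ),
      Real.log_pow, Real.log_pow,
      Real.log_rpow hμ0,
      Real.log_div one_ne_zero (ne_of_gt (div_pos hα0 two_pos)),
      Real.log_div (ne_of_gt hα0) (by norm_num : (2:ℝ) ≠ 0), Real.log_one]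
    have hαne : (α:ℝ) ≠ 0 := ne_of_gt hα0
    push_cast
    field_simp
    rw [Real.log_pow]
    ring
  -- restate the pdf in terms of f (matching the folded goal)
  have hfeq : ∀ x : ℝ,
      (α:ℝ) * (μ:ℝ) ^ μ * x ^ (m - 1) / (2 * Ω ^ (α * μ) * Real.Gamma μ) *
        Real.exp (-(μ:ℝ) * x ^ p / Ω ^ α) = f x := by
    intro x
    have hexp : -(μ:ℝ) * x ^ p / Ω ^ α = -b * x ^ p := by
      rw [hb_def]; field_simp
    rw [hexp]
    simp only [hf_def, hC_def]
    ring
  simp only [hfeq]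
  -- integrability and positivity of the finite-ρ integral
  have hInt : ∀ ρ : ℝ, 0 ≤ ρ →
      IntegrableOn (fun x => (1 + a * ρ * x) ^ (-ν) * f x) (Set.Ioi 0) := by
    intro ρ hρ
    refine MeasureTheory.Integrable.mono' hf_int ?_ ?_
    · refine ContinuousOn.aestronglyMeasurable ?_ measurableSet_Ioi
      refine ContinuousOn.mul ?_ hf_cont
      refine ContinuousOn.rpow_const (by fun_prop) ?_
      intro x hx
      have hx0 : (0:ℝ) < x := hx
      exact Or.inl (by positivity)
    · rw [ae_restrict_iff' measurableSet_Ioi]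
      refine ae_of_all _ (fun x hx => ?_)
      have hx0 : (0:ℝ) < x := hx
      have h1 : (1:ℝ) ≤ 1 + a * ρ * x := by nlinarith [mul_nonneg (mul_nonneg ha.le hρ) hx0.le]
      rw [Real.norm_eq_abs,
        abs_of_nonneg (mul_nonneg (Real.rpow_nonneg (x := 1 + a * ρ * x) (by nlinarith) _)
          (hf_nonneg x hx))]
      exact mul_le_of_le_one_left (hf_nonneg x hx)
        (Real.rpow_le_one_of_one_le_of_nonpos h1 (by linarith))
  have hIpos : ∀ ρ : ℝ, 0 ≤ ρ →
      0 < ∫ x in Set.Ioi (0:ℝ), (1 + a * ρ * x) ^ (-ν) * f x := by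
    intro ρ hρ
    have hnn : 0 ≤ᵐ[volume.restrict (Set.Ioi (0:ℝ))]
        fun x => (1 + a * ρ * x) ^ (-ν) * f x := by
      rw [EventuallyLE, ae_restrict_iff' measurableSet_Ioi]
      refine ae_of_all _ (fun x hx => ?_)
      have hx0 : (0:ℝ) < x := hx
      have h1 : (0:ℝ) < 1 + a * ρ * x := by nlinarith [mul_nonneg (mul_nonneg ha.le hρ) hx0.le]
      exact mul_nonneg (Real.rpow_nonneg h1.le _) (hf_nonneg x hx)
    rw [MeasureTheory.setIntegral_pos_iff_support_of_nonneg_ae hnn (hInt ρ hρ)]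
    have hsub : Set.Ioi (0:ℝ) ⊆
        Function.support (fun x => (1 + a * ρ * x) ^ (-ν) * f x) ∩ Set.Ioi 0 := by
      intro x hx
      have hx0 : (0:ℝ) < x := hx
      have h1 : (0:ℝ) < 1 + a * ρ * x := by nlinarith [mul_nonneg (mul_nonneg ha.le hρ) hx0.le]
      refine ⟨?_, hx⟩
      have := mul_pos (Real.rpow_pos_of_pos h1 (-ν)) (hf_pos x hx)
      exact Function.mem_support.2 (ne_of_gt this)
    calc (0:ENNReal) < volume (Set.Ioi (0:ℝ)) := by simp [Real.volume_Ioi]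
      _ ≤ _ := measure_mono hsub
  -- dominated convergence for the rescaled integrals
  have hconv : Tendsto (fun ρ : ℝ => ∫ x in Set.Ioi (0:ℝ), ((a * ρ)⁻¹ + x) ^ (-ν) * f x)
      atTop (nhds (∫ x in Set.Ioi (0:ℝ), x ^ (-ν) * f x)) := by
    refine MeasureTheory.tendsto_integral_filter_of_dominated_convergence
      (fun x => x ^ (-ν) * f x) ?_ ?_ hbound_int ?_
    · filter_upwards [eventually_gt_atTop (0:ℝ)] with ρ hρ
      refine ContinuousOn.aestronglyMeasurable ?_ measurableSet_Ioi
      refine ContinuousOn.mul ?_ hf_cont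
      refine ContinuousOn.rpow_const (by fun_prop) ?_
      intro x hx
      have hx0 : (0:ℝ) < x := hx
      have : (0:ℝ) < (a * ρ)⁻¹ := by positivity
      exact Or.inl (by positivity)
    · filter_upwards [eventually_gt_atTop (0:ℝ)] with ρ hρ
      rw [ae_restrict_iff' measurableSet_Ioi]
      refine ae_of_all _ (fun x hx => ?_)
      have hx0 : (0:ℝ) < x := hx
      have h1 : (0:ℝ) < (a * ρ)⁻¹ := by positivity
      rw [Real.norm_eq_abs,
        abs_of_nonneg (mul_nonneg (Real.rpow_nonneg (by positivity) _) (hf_nonneg x hx))]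
      refine mul_le_mul_of_nonneg_right ?_ (hf_nonneg x hx)
      exact Real.rpow_le_rpow_of_nonpos hx0 (by linarith) (by linarith)
    · rw [ae_restrict_iff' measurableSet_Ioi]
      refine ae_of_all _ (fun x hx => ?_)
      have hx0 : (0:ℝ) < x := hx
      refine Tendsto.mul_const _ ?_
      have hbase : Tendsto (fun ρ : ℝ => (a * ρ)⁻¹ + x) atTop (nhds x) := by
        have h0 : Tendsto (fun ρ : ℝ => (a * ρ)⁻¹) atTop (nhds 0) :=
          tendsto_inv_atTop_zero.comp (Tendsto.const_mul_atTop ha tendsto_id)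
        simpa using h0.add (tendsto_const_nhds (x := x))
      exact ((Real.continuousAt_rpow_const x (-ν) (Or.inl hx0.ne')).tendsto).comp hbase
  -- relate the rescaled integral to the original one
  have hFρ : ∀ ρ : ℝ, 0 < ρ →
      (∫ x in Set.Ioi (0:ℝ), ((a * ρ)⁻¹ + x) ^ (-ν) * f x)
        = (a * ρ) ^ ν * ∫ x in Set.Ioi (0:ℝ), (1 + a * ρ * x) ^ (-ν) * f x := by
    intro ρ hρ
    rw [← MeasureTheory.integral_const_mul]
    refine setIntegral_congr_fun measurableSet_Ioi (fun x hx => ?_)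
    have hx0 : (0:ℝ) < x := hx
    have haρ : 0 < a * ρ := mul_pos ha hρ
    have hrw : ((a * ρ)⁻¹ + x) = (1 + a * ρ * x) / (a * ρ) := by
      field_simp
    rw [hrw, Real.div_rpow (by nlinarith) haρ.le, Real.rpow_neg haρ.le]
    rw [div_inv_eq_mul]
    ring
  -- eventual equality of the two expressions
  have heq : (fun ρ : ℝ => -(1 / ν) *
        Real.logb 2 (∫ x in Set.Ioi (0:ℝ), ((a * ρ)⁻¹ + x) ^ (-ν) * f x))
      =ᶠ[atTop] (fun ρ : ℝ => -(1 / ν) *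
        Real.logb 2 (∫ x in Set.Ioi (0:ℝ), (1 + a * ρ * x) ^ (-ν) * f x)
        - Real.logb 2 (a * ρ)) := by
    filter_upwards [eventually_gt_atTop (0:ℝ)] with ρ hρ
    have haρ : 0 < a * ρ := mul_pos ha hρ
    rw [hFρ ρ hρ, Real.logb_mul (ne_of_gt (Real.rpow_pos_of_pos haρ ν))
      (ne_of_gt (hIpos ρ hρ.le)), Real.logb_rpow_eq_mul_logb_of_pos haρ]
    field_simp
    ring
  -- conclude
  have hlim : Tendsto (fun ρ : ℝ => -(1 / ν) *
      Real.logb 2 (∫ x in Set.Ioi (0:ℝ), ((a * ρ)⁻¹ + x) ^ (-ν) * f x)) atTop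
      (nhds (-(1 / ν) * Real.logb 2
        (((μ:ℝ) ^ ((1:ℝ)/α) / Ω) ^ (2 * ν) * (Real.Gamma s / Real.Gamma μ)))) := by
    refine Tendsto.const_mul _ ?_
    have hTne : (∫ x in Set.Ioi (0:ℝ), x ^ (-ν) * f x) ≠ 0 := by
      rw [hT]; exact ne_of_gt hT_pos
    have := ((Real.continuousAt_logb (b := 2) hTne).tendsto).comp hconv
    rwa [Function.comp_def, hT] at this
  exact Tendsto.congr' heq hlim
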